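/- Let A = {0,1} and let F be the set of 2-blocks u with u(0) ≠ u(1) or u(ε) = u(0) = u(1) = 1, so that the allowed 2-blocks of X_F are exactly (0,0,0), (0,1,1), (1,0,0) (the simplified golden-mean tree-shift). Then X_F is uniformly strongly irreducible with complete prefix code Σ^2: any two patterns accepted by X_F are connected through Σ^2. -/
import Mathlib


/-- Words over the binary alphabet Σ = {0,1}, encoded as lists of booleans
(0 ↦ `false`, 1 ↦ `true`).  Concatenation of words is list append. -/
abbrev Word : Type := List Bool

/-- An infinite tree over the alphabet `A`: a labeling of Σ* by `A`. -/
abbrev ITree (A : Type) : Type := Word → A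

/-- The shift map σ_w, given by (σ_w t)(x) = t(wx). -/
def shiftW {A : Type} (w : Word) (t : ITree A) : ITree A := fun x => t (w ++ x)

/-- A pattern: a support (set of nodes) together with labels.  Only the values
of `val` on `supp` are relevant. -/
structure Pattern (A : Type) where
  supp : Set Word
  val : Word → A

/-- The support of a pattern is prefix-closed. -/
def Pattern.PrefixClosed {A : Type} (u : Pattern A) : Prop :=
  ∀ x ∈ u.supp, ∀ y : Word, y <+: x → y ∈ u.supp

/-- A leaf of a pattern: a node of the support none of whose children lies in
the support. -/
def Pattern.IsLeaf {A : Type} (u : Pattern A) (w : Word) : Prop :=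
  w ∈ u.supp ∧ ∀ i : Bool, w ++ [i] ∉ u.supp

/-- The pattern `u` is accepted by the tree `t` (rooted at some node `x`). -/
def AcceptedBy {A : Type} (u : Pattern A) (t : ITree A) : Prop :=
  ∃ x : Word, ∀ y ∈ u.supp, u.val y = t (x ++ y)

/-- The pattern `u` is accepted by some tree of `X`. -/
def AcceptedIn {A : Type} (X : Set (ITree A)) (u : Pattern A) : Prop :=
  ∃ t ∈ X, AcceptedBy u t

/-- The set of trees avoiding every pattern of the forbidden set `F`. -/
def treeShiftOf {A : Type} (F : Set (Pattern A)) : Set (ITree A) :=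
  { t | ∀ u ∈ F, ¬ AcceptedBy u t }

/-- A tree-shift: a set of trees of the form `X_F` for a set `F` of finite
(prefix-closed) patterns. -/
def IsTreeShift {A : Type} (X : Set (ITree A)) : Prop :=
  ∃ F : Set (Pattern A), (∀ u ∈ F, u.supp.Finite ∧ u.PrefixClosed) ∧ X = treeShiftOf F

/-- A complete prefix code: a finite set of nonempty words, none a prefix of
another, such that every word of length ≥ max{|p| : p ∈ P} has a prefix in P. -/
def IsCPC (P : Finset Word) : Prop :=
  ([] : Word) ∉ P ∧
  (∀ p ∈ P, ∀ q ∈ P, p <+: q → p = q) ∧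
  (∀ x : Word, P.sup List.length ≤ x.length → ∃ p ∈ P, p <+: x)

/-- Σ^k, the set of all words of length k, as a finite set. -/
def fullCode (k : ℕ) : Finset Word :=
  Finset.image (fun f : Fin k → Bool => List.ofFn f) Finset.univ

/-- Σ_{n-1}: the set of all words of length < n (i.e. length ≤ n-1). -/
def sigmaLt (n : ℕ) : Set Word := { x : Word | x.length < n }

/-- An n-block of `X`: a pattern with support Σ_{n-1} accepted by some tree of `X`. -/
def IsNBlock {A : Type} (X : Set (ITree A)) (n : ℕ) (u : Pattern A) : Prop :=
  u.supp = sigmaLt n ∧ AcceptedIn X u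

/-- A (finite, prefix-closed) pattern accepted by some tree of `X`. -/
def GoodPattern {A : Type} (X : Set (ITree A)) (u : Pattern A) : Prop :=
  u.supp.Finite ∧ u.PrefixClosed ∧ AcceptedIn X u

/-- Patterns `u`, `v` are connected through `P` in `X`: there is `t ∈ X`
agreeing with `u` on its support and with a copy of `v` rooted at `wx` for
every leaf `w` of `u` and every `x ∈ P`. -/
def ConnectedThrough {A : Type} (X : Set (ITree A)) (P : Finset Word) (u v : Pattern A) : Prop :=
  ∃ t ∈ X, (∀ y ∈ u.supp, t y = u.val y) ∧
    ∀ w : Word, u.IsLeaf w → ∀ x ∈ P, ∀ y ∈ v.supp, t (w ++ x ++ y) = v.val y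

/-- Block gluing: a single CPC connects any two n-blocks, for every n. -/
def BlockGluing {A : Type} (X : Set (ITree A)) : Prop :=
  ∃ P : Finset Word, IsCPC P ∧ ∀ n : ℕ, ∀ u v : Pattern A,
    IsNBlock X n u → IsNBlock X n v → ConnectedThrough X P u v

/-- Uniformly block gluing: the CPC can be taken of the form Σ^k. -/
def UniformlyBlockGluing {A : Type} (X : Set (ITree A)) : Prop :=
  ∃ k : ℕ, IsCPC (fullCode k) ∧ ∀ n : ℕ, ∀ u v : Pattern A,
    IsNBlock X n u → IsNBlock X n v → ConnectedThrough X (fullCode k) u v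

/-- Strongly irreducible: a single CPC connects any two accepted patterns. -/
def StronglyIrreducible {A : Type} (X : Set (ITree A)) : Prop :=
  ∃ P : Finset Word, IsCPC P ∧ ∀ u v : Pattern A,
    GoodPattern X u → GoodPattern X v → ConnectedThrough X P u v

/-- Uniformly strongly irreducible: the CPC can be taken of the form Σ^k. -/
def UniformlyStronglyIrreducible {A : Type} (X : Set (ITree A)) : Prop :=
  ∃ k : ℕ, IsCPC (fullCode k) ∧ ∀ u v : Pattern A,
    GoodPattern X u → GoodPattern X v → ConnectedThrough X (fullCode k) u v

/-- A leaf of a set of nodes. -/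
def SetLeaf (L : Set Word) (w : Word) : Prop := w ∈ L ∧ ∀ i : Bool, w ++ [i] ∉ L

/-- Topological mixing. -/
def TopologicallyMixing {A : Type} (X : Set (ITree A)) : Prop :=
  ∀ L1 L2 : Set Word, L1.Finite → L2.Finite →
    (∀ x ∈ L1, ∀ y : Word, y <+: x → y ∈ L1) →
    (∀ x ∈ L2, ∀ y : Word, y <+: x → y ∈ L2) →
    ∃ P : Finset Word, IsCPC P ∧ ∀ t1 ∈ X, ∀ t2 ∈ X, ∃ t ∈ X,
      (∀ y ∈ L1, t y = t1 y) ∧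
      ∀ w : Word, SetLeaf L1 w → ∀ x ∈ P, ∀ y ∈ L2, t (w ++ x ++ y) = t2 y

/-- The vertex tree-shift of the pair of 0-1 matrices `A0`, `A1`. -/
def vertexShift {A : Type} (A0 A1 : A → A → Bool) : Set (ITree A) :=
  { t | ∀ x : Word,
      A0 (t x) (t (x ++ [false])) = true ∧ A1 (t x) (t (x ++ [true])) = true }

/-- The n-blocks of `X`, realized as labelings of Σ_{n-1}; used for counting
`|B_n(X)|`. -/
def blockFuns {A : Type} (X : Set (ITree A)) (n : ℕ) :
    Set ({ x : Word // x.length < n } → A) :=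
  { f | ∃ t ∈ X, ∃ r : Word, ∀ y : { x : Word // x.length < n }, f y = t (r ++ y.val) }

/-- The forbidden set of the simplified golden-mean tree-shift: 2-blocks u
(support Σ_1) with u(0) ≠ u(1) or u(ε) = u(0) = u(1) = 1. -/
def goldenF : Set (Pattern Bool) :=
  { u | u.supp = { x : Word | x.length ≤ 1 } ∧
        (u.val [false] ≠ u.val [true] ∨
          (u.val [] = true ∧ u.val [false] = true ∧ u.val [true] = true)) }

/-! ### Auxiliary lemmas -/

lemma mem_fullCode {k : ℕ} {x : Word} : x ∈ fullCode k ↔ x.length = k := by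
  constructor
  · intro hx
    simp only [fullCode, Finset.mem_image] at hx
    obtain ⟨f, -, rfl⟩ := hx
    simp
  · intro h
    subst h
    simp only [fullCode, Finset.mem_image]
    exact ⟨x.get, Finset.mem_univ _, List.ofFn_get x⟩

lemma isCPC_fullCode2 : IsCPC (fullCode 2) := by
  refine ⟨?_, ?_, ?_⟩
  · intro h
    simpa using mem_fullCode.1 h
  · intro p hp q hq hpq
    exact hpq.eq_of_length (by rw [mem_fullCode.1 hp, mem_fullCode.1 hq])
  · intro x hx
    have hmem : ([false, false] : Word) ∈ fullCode 2 := mem_fullCode.2 rfl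
    have h2 : (2:ℕ) ≤ (fullCode 2).sup List.length := by
      simpa using Finset.le_sup (f := List.length) hmem
    have h2x : 2 ≤ x.length := h2.trans hx
    refine ⟨x.take 2, mem_fullCode.2 ?_, List.take_prefix 2 x⟩
    rw [List.length_take]
    omega

/-- The local characterisation of membership in the simplified golden-mean
tree-shift. -/
def LocalOK (t : ITree Bool) : Prop :=
  ∀ x : Word, t (x ++ [false]) = t (x ++ [true]) ∧ (t x = true → t (x ++ [false]) = false)

lemma mem_golden_iff {t : ITree Bool} : t ∈ treeShiftOf goldenF ↔ LocalOK t := by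
  constructor
  · intro ht x
    set p : Pattern Bool := ⟨{y : Word | y.length ≤ 1}, fun y => t (x ++ y)⟩ with hp
    have hacc : AcceptedBy p t := ⟨x, fun y _ => rfl⟩
    have heq : t (x ++ [false]) = t (x ++ [true]) := by
      by_contra hne
      exact ht p ⟨rfl, Or.inl hne⟩ hacc
    refine ⟨heq, fun hx => ?_⟩
    by_contra hf
    rw [Bool.not_eq_false] at hf
    refine ht p ⟨rfl, Or.inr ⟨?_, ?_, ?_⟩⟩ hacc
    · show t (x ++ []) = true
      simpa using hx
    · exact hf
    · show t (x ++ [true]) = true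
      rw [← heq]; exact hf
  · intro hloc u hu hacc
    obtain ⟨hsupp, hval⟩ := hu
    obtain ⟨x, hx⟩ := hacc
    have h0 : u.val [false] = t (x ++ [false]) := hx _ (by rw [hsupp]; simp)
    have h1 : u.val [true] = t (x ++ [true]) := hx _ (by rw [hsupp]; simp)
    have he : u.val [] = t (x ++ []) := hx _ (by rw [hsupp]; simp)
    obtain ⟨heq, himp⟩ := hloc x
    rcases hval with hne | ⟨ha, hb, hc⟩
    · exact hne (by rw [h0, h1, heq])
    · have htx : t x = true := by
        have := he.symm.trans ha
        simpa using this
      have h00 := himp htx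
      rw [← h0, hb] at h00
      simp at h00

lemma LocalOK.shift {t : ITree Bool} (h : LocalOK t) (w : Word) : LocalOK (shiftW w t) := by
  intro x
  have h' := h (w ++ x)
  simpa [shiftW, List.append_assoc] using h'

lemma leaf_max {u : Pattern Bool} (hpc : u.PrefixClosed) {w z : Word}
    (hw : u.IsLeaf w) (hz : z ∈ u.supp) (hpre : w <+: z) : z = w := by
  obtain ⟨s, rfl⟩ := hpre
  cases s with
  | nil => simp
  | cons i s' =>
      exact absurd (hpc _ hz (w ++ [i]) ⟨s', by simp⟩) (hw.2 i)

lemma leaf_unique {u : Pattern Bool} (hpc : u.PrefixClosed) {w w' z : Word}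
    (hw : u.IsLeaf w) (hw' : u.IsLeaf w') (h1 : w <+: z) (h2 : w' <+: z) : w = w' := by
  rcases List.prefix_or_prefix_of_prefix h1 h2 with h | h
  · exact (leaf_max hpc hw hw'.1 h).symm
  · exact leaf_max hpc hw' hw.1 h

/- The gluing construction: follow `t1` on and off the pattern `u`, but
below each leaf `w` of `u` put `false` at depth 1 and a copy of `t2` at
each node of depth 2. -/
open Classical in
noncomputable def glue (u : Pattern Bool) (t1 t2 : ITree Bool) : ITree Bool :=
  fun z =>
    if h : ∃ w, u.IsLeaf w ∧ w <+: z ∧ w ≠ z then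
      if (z.drop h.choose.length).length = 1 then false
      else t2 ((z.drop h.choose.length).drop 2)
    else t1 z

lemma glue_spec {u : Pattern Bool} (hpc : u.PrefixClosed) (t1 t2 : ITree Bool)
    {w z : Word} (hw : u.IsLeaf w) (hpre : w <+: z) (hne : w ≠ z) :
    glue u t1 t2 z =
      if (z.drop w.length).length = 1 then false else t2 ((z.drop w.length).drop 2) := by
  have h : ∃ w, u.IsLeaf w ∧ w <+: z ∧ w ≠ z := ⟨w, hw, hpre, hne⟩
  have hcw : h.choose = w := leaf_unique hpc h.choose_spec.1 hw h.choose_spec.2.1 hpre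
  simp only [glue]
  rw [dif_pos h, hcw]

lemma glue_not {u : Pattern Bool} (t1 t2 : ITree Bool) {z : Word}
    (h : ¬ ∃ w, u.IsLeaf w ∧ w <+: z ∧ w ≠ z) : glue u t1 t2 z = t1 z := by
  simp only [glue]
  rw [dif_neg h]

lemma glue_localOK {u : Pattern Bool} (hpc : u.PrefixClosed) {t1 t2 : ITree Bool}
    (h1 : LocalOK t1) (h2 : LocalOK t2) : LocalOK (glue u t1 t2) := by
  intro z
  have child : ∀ (w : Word), u.IsLeaf w → w <+: z → ∀ i : Bool,
      glue u t1 t2 (z ++ [i]) =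
        if (z.drop w.length ++ [i]).length = 1 then false
        else t2 ((z.drop w.length ++ [i]).drop 2) := by
    intro w hw hpre i
    have hlen : w.length ≤ z.length := hpre.length_le
    have hpre' : w <+: z ++ [i] := hpre.trans ⟨[i], rfl⟩
    have hne' : w ≠ z ++ [i] := by
      intro heq
      apply_fun List.length at heq
      simp at heq
      omega
    rw [glue_spec hpc t1 t2 hw hpre' hne', List.drop_append_of_le_length hlen]
  by_cases hz : ∃ w, u.IsLeaf w ∧ w <+: z
  · obtain ⟨w, hw, hpre⟩ := hz
    by_cases heq : w = z
    · subst heq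
      have hc : ∀ i, glue u t1 t2 (w ++ [i]) = false := by
        intro i
        rw [child w hw List.prefix_rfl i]
        simp [List.drop_length]
      exact ⟨(hc false).trans (hc true).symm, fun _ => hc false⟩
    · have hlen : w.length < z.length := by
        rcases lt_or_eq_of_le hpre.length_le with h | h
        · exact h
        · exact absurd (hpre.eq_of_length h) heq
      have hslen : (z.drop w.length).length = z.length - w.length := by simp
      have hzval : glue u t1 t2 z =
          if (z.drop w.length).length = 1 then false else t2 ((z.drop w.length).drop 2) :=
        glue_spec hpc t1 t2 hw hpre heq
      by_cases h1s : (z.drop w.length).length = 1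
      · have hc : ∀ i, glue u t1 t2 (z ++ [i]) = t2 [] := by
          intro i
          rw [child w hw hpre i, if_neg (by simp only [List.length_append, List.length_singleton]; omega)]
          rw [List.drop_eq_nil_of_le (by simp only [List.length_append, List.length_singleton]; omega)]
        refine ⟨(hc false).trans (hc true).symm, fun hzt => ?_⟩
        rw [hzval, if_pos h1s] at hzt
        exact absurd hzt (by simp)
      · have h2s : 2 ≤ (z.drop w.length).length := by omega
        have hc : ∀ i, glue u t1 t2 (z ++ [i]) = t2 ((z.drop w.length).drop 2 ++ [i]) := by
          intro i
          rw [child w hw hpre i, if_neg (by simp only [List.length_append, List.length_singleton]; omega)]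
          rw [List.drop_append_of_le_length h2s]
        obtain ⟨heq2, himp2⟩ := h2 ((z.drop w.length).drop 2)
        refine ⟨?_, fun hzt => ?_⟩
        · rw [hc false, hc true, heq2]
        · rw [hzval, if_neg h1s] at hzt
          rw [hc false]
          exact himp2 hzt
  · push_neg at hz
    have hnz : ¬ ∃ w, u.IsLeaf w ∧ w <+: z ∧ w ≠ z := by
      rintro ⟨w, hw, hpre, -⟩
      exact hz w hw hpre
    have hnc : ∀ i : Bool, ¬ ∃ w, u.IsLeaf w ∧ w <+: z ++ [i] ∧ w ≠ z ++ [i] := by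
      rintro i ⟨w, hw, hpre, hne⟩
      rcases List.prefix_concat_iff.1 hpre with h | h
      · exact hne h
      · exact hz w hw h
    rw [glue_not t1 t2 hnz, glue_not t1 t2 (hnc false), glue_not t1 t2 (hnc true)]
    exact h1 z

lemma golden_connected : ∀ u v : Pattern Bool,
    GoodPattern (treeShiftOf goldenF) u → GoodPattern (treeShiftOf goldenF) v →
    ConnectedThrough (treeShiftOf goldenF) (fullCode 2) u v := by
  intro u v hu hv
  obtain ⟨-, hupc, t1, ht1, x1, hx1⟩ := hu
  obtain ⟨-, -, t2, ht2, x2, hx2⟩ := hv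
  set t1' := shiftW x1 t1 with ht1'
  set t2' := shiftW x2 t2 with ht2'
  have l1 : LocalOK t1' := (mem_golden_iff.1 ht1).shift x1
  have l2 : LocalOK t2' := (mem_golden_iff.1 ht2).shift x2
  refine ⟨glue u t1' t2', mem_golden_iff.2 (glue_localOK hupc l1 l2), ?_, ?_⟩
  · intro y hy
    have hno : ¬ ∃ w, u.IsLeaf w ∧ w <+: y ∧ w ≠ y := by
      rintro ⟨w, hw, hpre, hne⟩
      exact hne (leaf_max hupc hw hy hpre).symm
    rw [glue_not _ _ hno]
    exact (hx1 y hy).symm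
  · intro w hw x hx y hy
    have hx2len : x.length = 2 := mem_fullCode.1 hx
    have hpre : w <+: w ++ (x ++ y) := ⟨x ++ y, rfl⟩
    have hne : w ≠ w ++ (x ++ y) := by
      intro heq
      apply_fun List.length at heq
      simp only [List.length_append, hx2len] at heq
      omega
    rw [List.append_assoc]
    rw [glue_spec hupc _ _ hw hpre hne, List.drop_left,
      if_neg (by simp only [List.length_append, hx2len]; omega),
      List.drop_left' hx2len]
    exact (hx2 y hy).symm

/-- the simplified golden-mean tree-shift is uniformly strongly
irreducible with complete prefix code Σ^2. -/
theorem stmt15 :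
    UniformlyStronglyIrreducible (treeShiftOf goldenF) ∧
    IsCPC (fullCode 2) ∧
    ∀ u v : Pattern Bool,
      GoodPattern (treeShiftOf goldenF) u → GoodPattern (treeShiftOf goldenF) v →
      ConnectedThrough (treeShiftOf goldenF) (fullCode 2) u v :=
  ⟨⟨2, isCPC_fullCode2, golden_connected⟩, isCPC_fullCode2, golden_connected⟩
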